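/- (p-adic convergence of the Kummer series) Let r, q be coprime positive integers with 1/2 < r/q < 1 and p = kq+1 an odd prime. Set c_n = (−r/q)_n / ( (−2r/q)_n · n! ) ∈ ℚ_p. Then |c_n p^n|_p → 0 as n → ∞ (indeed ord_p(c_n p^n) ≥ n(p−2)/(p−1) − log_p n − 1), and consequently the series M(x) = Σ_{n=0}^{∞} c_n p^n x^n converges p-adically uniformly for x ∈ ℤ_p: for every ε > 0 there is N such that for all N' ≥ N and all x ∈ ℤ_p, |Σ_{n≥N'} c_n p^n x^n|_p < ε. Hence M defines a (continuous) function ℤ_p → ℚ_p. -/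

import Mathlib

open Filter

open Finset

/-- The limiting Kummer coefficient `c_n = (−r/q)_n / ((−2r/q)_n · n!)` in `ℚ_p`. -/
noncomputable def kummerCoeff (p : ℕ) [Fact p.Prime] (q r : ℕ) (n : ℕ) : ℚ_[p] :=
  (ascPochhammer ℚ_[p] n).eval (-(r : ℚ_[p]) / q) /
    ((ascPochhammer ℚ_[p] n).eval (-(2 * r : ℚ_[p]) / q) * (n.factorial : ℚ_[p]))



lemma rho_exists (p q r k : ℕ) (hp : p = k * q + 1) (hk : 0 < k) (hlt : r < q)
    (hhalf : q < 2 * r) (hodd : p ≠ 2) (hpp : p.Prime) (i : ℕ) (hi : 1 ≤ i) :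
    ∃ ρ : ℕ, 1 ≤ ρ ∧ 2 * ρ < p ^ i ∧ (p : ℤ) ^ i ∣ ((ρ : ℤ) * q - r) := by
  have hr1 : 1 ≤ r := by omega
  have hkZ : (1:ℤ) ≤ (k:ℤ) := by exact_mod_cast hk
  have hltZ : (r:ℤ) < (q:ℤ) := by exact_mod_cast hlt
  set S : ℤ := ∑ t ∈ Finset.range i, (p : ℤ) ^ t with hS
  have hgs : S * ((p : ℤ) - 1) = (p : ℤ) ^ i - 1 := geom_sum_mul _ _
  have hkq : (k : ℤ) * q = (p : ℤ) - 1 := by push_cast [hp]; ring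
  have hS1 : 1 ≤ S := by
    have h0 : (0:ℕ) ∈ Finset.range i := Finset.mem_range.mpr hi
    have := Finset.single_le_sum (f := fun t => (p : ℤ) ^ t)
      (fun t _ => by positivity) h0
    simpa using this
  -- k * (2r - q) ≥ 2
  have hkd : 2 ≤ (k : ℤ) * (2 * (r : ℤ) - q) := by
    have hd1 : 1 ≤ 2 * (r : ℤ) - q := by omega
    rcases eq_or_lt_of_le hd1 with hd | hd
    · -- 2r - q = 1, so q odd, so k even
      have hq_odd : ¬ Even q := by
        intro hq
        obtain ⟨m, hm⟩ := hq
        have : (q:ℤ) = 2 * (r:ℤ) - 1 := by omega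
        omega
      have hp_odd : Odd p := hpp.odd_of_ne_two hodd
      have hkq_even : Even (k * q) := by
        rcases Nat.even_or_odd (k * q) with h | h
        · exact h
        · exfalso
          have : Even p := by rw [hp]; exact h.add_one
          exact (Nat.not_even_iff_odd.mpr hp_odd) this
      have hk_even : Even k := (Nat.even_mul.mp hkq_even).resolve_right hq_odd
      have hk2 : (2:ℤ) ≤ (k:ℤ) := by
        obtain ⟨m, hm⟩ := hk_even
        have : k = 2 * m := by omega
        have hm1 : 1 ≤ m := by omega
        push_cast [this]; omega
      calc (2:ℤ) = 2 * 1 := by ring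
        _ ≤ (k:ℤ) * (2 * (r:ℤ) - q) := by rw [← hd]; omega
    · have h2 : 2 ≤ 2 * (r : ℤ) - q := hd
      nlinarith
  have hrk : (r : ℤ) * k + 1 ≤ (k : ℤ) * q := by nlinarith
  set P : ℤ := (p : ℤ) ^ i with hPdef
  have hPS : (k : ℤ) * q * S = P - 1 := by rw [hkq]; linarith [hgs]
  set ρz : ℤ := P - (r : ℤ) * k * S with hρz
  have hρ1 : 2 ≤ ρz := by nlinarith
  have hρ2 : 2 * ρz < P := by nlinarith
  have hdvd : P ∣ (ρz * q - r) := by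
    have heq : ρz * q - r = P * (q - r) := by
      have h1 : (r:ℤ) * ((k:ℤ) * q * S) = (r:ℤ) * (P - 1) := by rw [hPS]
      nlinarith [h1]
    rw [heq]; exact Dvd.intro _ rfl
  have hPnat : ((p ^ i : ℕ) : ℤ) = P := by push_cast; rfl
  refine ⟨ρz.toNat, by omega, by omega, ?_⟩
  rwa [Int.toNat_of_nonneg (by omega)]



lemma count_le (p q r n i ρ : ℕ) (hpp : p.Prime) (hρ1 : 1 ≤ ρ) (hρ2 : 2 * ρ < p ^ i)
    (hdvd : (p : ℤ) ^ i ∣ ((ρ : ℤ) * q - r)) (hq : ¬ (p ∣ q)) :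
    ((Finset.range n).filter (fun j : ℕ => (p : ℤ) ^ i ∣ ((j : ℤ) * q - 2 * r))).card ≤
      ((Finset.range n).filter (fun j : ℕ => (p : ℤ) ^ i ∣ ((j : ℤ) * q - r))).card := by
  have hqZ : ¬ ((p : ℤ) ∣ (q : ℤ)) := by exact_mod_cast hq
  have hcop : IsCoprime ((p : ℤ) ^ i) (q : ℤ) :=
    (IsCoprime.pow_left ((Nat.prime_iff_prime_int.mp hpp).coprime_iff_not_dvd.mpr hqZ))
  have hPnat : ((p ^ i : ℕ) : ℤ) = (p : ℤ) ^ i := by push_cast; rfl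
  have key : ∀ j ∈ (Finset.range n).filter (fun j : ℕ => (p : ℤ) ^ i ∣ ((j : ℤ) * q - 2 * r)),
      2 * ρ ≤ j := by
    intro j hj
    rw [Finset.mem_filter] at hj
    obtain ⟨-, hjd⟩ := hj
    have h2 : (p : ℤ) ^ i ∣ ((j : ℤ) - 2 * ρ) * q := by
      have heq : ((j : ℤ) - 2 * ρ) * q = ((j : ℤ) * q - 2 * r) - 2 * ((ρ : ℤ) * q - r) := by ring
      rw [heq]
      exact dvd_sub hjd (Dvd.dvd.mul_left hdvd 2)
    have h3 : (p : ℤ) ^ i ∣ ((j : ℤ) - 2 * ρ) := hcop.dvd_of_dvd_mul_right h2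
    by_contra hcon
    push_neg at hcon
    have hpos : 0 < 2 * (ρ : ℤ) - j := by exact_mod_cast (by omega : (0:ℤ) < 2 * (ρ:ℤ) - j)
    have h4 : (p : ℤ) ^ i ∣ (2 * (ρ : ℤ) - j) := by
      rw [show (2 * (ρ : ℤ) - j) = -((j : ℤ) - 2 * ρ) by ring]
      exact dvd_neg.mpr h3
    have h5 := Int.le_of_dvd hpos h4
    rw [← hPnat] at h5
    omega
  apply Finset.card_le_card_of_injOn (fun j => j - ρ)
  · intro j hj
    have h2ρ := key j hj
    rw [Finset.mem_coe, Finset.mem_filter] at hj ⊢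
    obtain ⟨hjn, hjd⟩ := hj
    rw [Finset.mem_range] at hjn
    refine ⟨Finset.mem_range.mpr (show j - ρ < n by omega), ?_⟩
    have hcast : ((j - ρ : ℕ) : ℤ) = (j : ℤ) - ρ := by omega
    rw [hcast]
    have heq : ((j : ℤ) - ρ) * q - r = ((j : ℤ) * q - 2 * r) - ((ρ : ℤ) * q - r) := by ring
    rw [heq]
    exact dvd_sub hjd hdvd
  · intro a ha b hb hab
    have h2a := key a ha
    have h2b := key b hb
    simp only at hab
    omega



lemma val_eq_card {p : ℕ} [hp : Fact p.Prime] (x : ℤ) (hx : x ≠ 0) (B : ℕ)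
    (hB : padicValInt p x < B) :
    padicValInt p x = ((Finset.Ico 1 B).filter fun i => (p : ℤ) ^ i ∣ x).card := by
  have hiff : ∀ i : ℕ, ((p : ℤ) ^ i ∣ x ↔ i ≤ padicValInt p x) := by
    intro i
    rw [padicValInt_dvd_iff]
    simp [hx]
  have hset : ((Finset.Ico 1 B).filter fun i => (p : ℤ) ^ i ∣ x) =
      Finset.Ico 1 (padicValInt p x + 1) := by
    ext i
    simp only [Finset.mem_filter, Finset.mem_Ico, hiff i]
    omega
  rw [hset, Nat.card_Ico]
  omega

lemma valsum_le (p q r n : ℕ) [hp : Fact p.Prime] (hodd : p ≠ 2)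
    (hcop : Nat.Coprime r q) (hhalf : q < 2 * r) (hlt : r < q)
    (k : ℕ) (hk : 0 < k) (hpeq : p = k * q + 1)
    (hq : ¬ (p ∣ q))
    (ha0 : ∀ j : ℕ, ((j : ℤ) * q - r) ≠ 0) (hb0 : ∀ j : ℕ, ((j : ℤ) * q - 2 * r) ≠ 0) :
    ∑ j ∈ Finset.range n, padicValInt p ((j : ℤ) * q - 2 * r) ≤
      ∑ j ∈ Finset.range n, padicValInt p ((j : ℤ) * q - r) := by
  set B : ℕ := 1 + ∑ j ∈ Finset.range n,
    (padicValInt p ((j : ℤ) * q - r) + padicValInt p ((j : ℤ) * q - 2 * r)) with hB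
  have hBa : ∀ j ∈ Finset.range n, padicValInt p ((j : ℤ) * q - r) < B := by
    intro j hj
    have := Finset.single_le_sum
      (f := fun j : ℕ => padicValInt p ((j : ℤ) * q - r) + padicValInt p ((j : ℤ) * q - 2 * r))
      (fun _ _ => Nat.zero_le _) hj
    omega
  have hBb : ∀ j ∈ Finset.range n, padicValInt p ((j : ℤ) * q - 2 * r) < B := by
    intro j hj
    have := Finset.single_le_sum
      (f := fun j : ℕ => padicValInt p ((j : ℤ) * q - r) + padicValInt p ((j : ℤ) * q - 2 * r))
      (fun _ _ => Nat.zero_le _) hj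
    omega
  calc ∑ j ∈ Finset.range n, padicValInt p ((j : ℤ) * q - 2 * r)
      = ∑ j ∈ Finset.range n, ((Finset.Ico 1 B).filter fun i => (p : ℤ) ^ i ∣ ((j : ℤ) * q - 2 * r)).card := by
        apply Finset.sum_congr rfl
        intro j hj
        exact val_eq_card _ (hb0 j) B (hBb j hj)
    _ = ∑ i ∈ Finset.Ico 1 B, ((Finset.range n).filter fun j : ℕ => (p : ℤ) ^ i ∣ ((j : ℤ) * q - 2 * r)).card := by
        simp_rw [Finset.card_filter]
        rw [Finset.sum_comm]
    _ ≤ ∑ i ∈ Finset.Ico 1 B, ((Finset.range n).filter fun j : ℕ => (p : ℤ) ^ i ∣ ((j : ℤ) * q - r)).card := by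
        apply Finset.sum_le_sum
        intro i hi
        rw [Finset.mem_Ico] at hi
        obtain ⟨ρ, h1, h2, h3⟩ := rho_exists p q r k hpeq hk hlt hhalf hodd hp.out i hi.1
        exact count_le p q r n i ρ hp.out h1 h2 h3 hq
    _ = ∑ j ∈ Finset.range n, ((Finset.Ico 1 B).filter fun i => (p : ℤ) ^ i ∣ ((j : ℤ) * q - r)).card := by
        simp_rw [Finset.card_filter]
        rw [Finset.sum_comm]
    _ = ∑ j ∈ Finset.range n, padicValInt p ((j : ℤ) * q - r) := by
        apply Finset.sum_congr rfl
        intro j hj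
        exact (val_eq_card _ (ha0 j) B (hBa j hj)).symm



lemma poch_eval {R : Type*} [CommRing R] (n : ℕ) (x : R) :
    (ascPochhammer R n).eval x = ∏ j ∈ Finset.range n, (x + j) := by
  induction n with
  | zero => simp [ascPochhammer_zero]
  | succ n ih => rw [ascPochhammer_succ_eval, ih, Finset.prod_range_succ]

lemma norm_int_eq {p : ℕ} [Fact p.Prime] (z : ℤ) (hz : z ≠ 0) :
    ‖(z : ℚ_[p])‖ = ((p : ℝ)⁻¹) ^ (padicValInt p z) := by
  rw [show ((z : ℚ_[p])) = (((z : ℚ) : ℚ_[p])) by norm_cast, Padic.eq_padicNorm,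
    padicNorm.eq_zpow_of_nonzero (by exact_mod_cast hz), padicValRat.of_int]
  push_cast
  rw [zpow_neg, zpow_natCast, ← inv_pow]

lemma key_bound (p q r k : ℕ) [hp : Fact p.Prime] (hodd : p ≠ 2)
    (hcop : Nat.Coprime r q) (hhalf : q < 2 * r) (hlt : r < q)
    (hk : 0 < k) (hpeq : p = k * q + 1) (n : ℕ) :
    ‖kummerCoeff p q r n * (p : ℚ_[p]) ^ n‖ ≤
      ((p : ℝ) ^ (-(((p : ℝ) - 2) / ((p : ℝ) - 1)))) ^ n := by
  have hr1 : 1 ≤ r := by omega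
  have hq2 : 2 ≤ q := by omega
  have hqp : q < p := by
    have : q ≤ k * q := Nat.le_mul_of_pos_left q hk
    omega
  have hp3 : 3 ≤ p := (hp.out.two_le).lt_of_ne (Ne.symm hodd)
  have hpq : ¬ p ∣ q := fun h => by
    have := Nat.le_of_dvd (by omega) h
    omega
  have ha0 : ∀ j : ℕ, ((j : ℤ) * q - r) ≠ 0 := by
    intro j h
    have hjq : j * q = r := by exact_mod_cast sub_eq_zero.mp h
    have : q ∣ r := Dvd.intro_left j hjq
    have := Nat.le_of_dvd (by omega) this
    omega
  have hb0 : ∀ j : ℕ, ((j : ℤ) * q - 2 * r) ≠ 0 := by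
    intro j h
    have hjq : j * q = 2 * r := by exact_mod_cast sub_eq_zero.mp h
    have hq2r : q ∣ 2 * r := Dvd.intro_left j hjq
    have := (Nat.Coprime.dvd_of_dvd_mul_right (hcop.symm) hq2r)
    have := Nat.le_of_dvd (by omega) this
    omega
  have hq0 : (q : ℚ_[p]) ≠ 0 := Nat.cast_ne_zero.mpr (by omega)
  have hnq : ‖(q : ℚ_[p])‖ = 1 := by
    have h1 : ‖((q : ℤ) : ℚ_[p])‖ ≤ 1 := Padic.norm_int_le_one _
    have h2 : ¬ ‖((q : ℤ) : ℚ_[p])‖ < 1 := by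
      rw [Padic.norm_intCast_lt_one_iff]
      exact_mod_cast hpq
    have h3 : ‖((q : ℤ) : ℚ_[p])‖ = 1 := le_antisymm h1 (not_lt.mp h2)
    rwa [show ((q : ℤ) : ℚ_[p]) = (q : ℚ_[p]) by push_cast; rfl] at h3
  -- evaluate the Pochhammer products
  have hA : (ascPochhammer ℚ_[p] n).eval (-(r : ℚ_[p]) / q) =
      (∏ j ∈ Finset.range n, ((((j : ℤ) * q - r : ℤ)) : ℚ_[p])) / (q : ℚ_[p]) ^ n := by
    rw [poch_eval]
    have hfac : ∀ j ∈ Finset.range n,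
        -(r : ℚ_[p]) / q + (j : ℚ_[p]) = ((((j : ℤ) * q - r : ℤ)) : ℚ_[p]) / q := by
      intro j _
      push_cast
      field_simp
      ring
    rw [Finset.prod_congr rfl hfac, Finset.prod_div_distrib, Finset.prod_const, Finset.card_range]
  have hB : (ascPochhammer ℚ_[p] n).eval (-(2 * r : ℚ_[p]) / q) =
      (∏ j ∈ Finset.range n, ((((j : ℤ) * q - 2 * r : ℤ)) : ℚ_[p])) / (q : ℚ_[p]) ^ n := by
    rw [poch_eval]
    have hfac : ∀ j ∈ Finset.range n,
        -(2 * r : ℚ_[p]) / q + (j : ℚ_[p]) = ((((j : ℤ) * q - 2 * r : ℤ)) : ℚ_[p]) / q := by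
      intro j _
      push_cast
      field_simp
      ring
    rw [Finset.prod_congr rfl hfac, Finset.prod_div_distrib, Finset.prod_const, Finset.card_range]
  set t : ℝ := (p : ℝ)⁻¹ with ht
  have hp1R : (1 : ℝ) < (p : ℝ) := by exact_mod_cast hp.out.one_lt
  have ht0 : 0 < t := by positivity
  have ht1 : t < 1 := by
    rw [ht, inv_lt_one_iff₀]; right; exact hp1R
  set Va : ℕ := ∑ j ∈ Finset.range n, padicValInt p ((j : ℤ) * q - r) with hVa
  set Vb : ℕ := ∑ j ∈ Finset.range n, padicValInt p ((j : ℤ) * q - 2 * r) with hVb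
  set Vf : ℕ := padicValNat p n.factorial with hVf
  have hnormA : ‖(ascPochhammer ℚ_[p] n).eval (-(r : ℚ_[p]) / q)‖ = t ^ Va := by
    rw [hA, norm_div, norm_pow, hnq, one_pow, div_one, norm_prod]
    rw [show (∏ j ∈ Finset.range n, ‖((((j : ℤ) * q - r : ℤ)) : ℚ_[p])‖)
        = ∏ j ∈ Finset.range n, t ^ (padicValInt p ((j : ℤ) * q - r)) from
      Finset.prod_congr rfl fun j _ => norm_int_eq _ (ha0 j)]
    rw [Finset.prod_pow_eq_pow_sum]
  have hnormB : ‖(ascPochhammer ℚ_[p] n).eval (-(2 * r : ℚ_[p]) / q)‖ = t ^ Vb := by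
    rw [hB, norm_div, norm_pow, hnq, one_pow, div_one, norm_prod]
    rw [show (∏ j ∈ Finset.range n, ‖((((j : ℤ) * q - 2 * r : ℤ)) : ℚ_[p])‖)
        = ∏ j ∈ Finset.range n, t ^ (padicValInt p ((j : ℤ) * q - 2 * r)) from
      Finset.prod_congr rfl fun j _ => norm_int_eq _ (hb0 j)]
    rw [Finset.prod_pow_eq_pow_sum]
  have hnormF : ‖(n.factorial : ℚ_[p])‖ = t ^ Vf := by
    rw [show ((n.factorial : ℚ_[p])) = (((n.factorial : ℤ)) : ℚ_[p]) by push_cast; rfl,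
      norm_int_eq _ (by exact_mod_cast n.factorial_ne_zero), hVf, padicValInt.of_nat]
  have hnormP : ‖(p : ℚ_[p]) ^ n‖ = t ^ n := by
    rw [norm_pow, Padic.norm_p]
  have hVba : Vb ≤ Va :=
    valsum_le p q r n hodd hcop hhalf hlt k hk hpeq hpq ha0 hb0
  -- assemble
  have hnorm : ‖kummerCoeff p q r n * (p : ℚ_[p]) ^ n‖ = t ^ Va / (t ^ Vb * t ^ Vf) * t ^ n := by
    rw [norm_mul, kummerCoeff, norm_div, norm_mul, hnormA, hnormB, hnormF, hnormP]
  rw [hnorm]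
  have hstep1 : t ^ Va / (t ^ Vb * t ^ Vf) * t ^ n ≤ t ^ n * (t ^ Vf)⁻¹ := by
    have h1 : t ^ Va ≤ t ^ Vb := pow_le_pow_of_le_one ht0.le ht1.le hVba
    have h2 : (0:ℝ) < t ^ Vb * t ^ Vf := by positivity
    rw [div_mul_eq_mul_div, div_le_iff₀ h2]
    have : t ^ n * (t ^ Vf)⁻¹ * (t ^ Vb * t ^ Vf) = t ^ n * t ^ Vb := by
      field_simp
    rw [this]
    calc t ^ Va * t ^ n ≤ t ^ Vb * t ^ n :=
          mul_le_mul_of_nonneg_right h1 (by positivity)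
      _ = t ^ n * t ^ Vb := by ring
  refine hstep1.trans ?_
  -- t^n * (t^Vf)⁻¹ = p^(Vf - n) ≤ p^(n/(p-1) - n) = target
  have hVfn : ((p : ℝ) - 1) * (Vf : ℝ) ≤ (n : ℝ) := by
    have hnat : (p - 1) * Vf ≤ n := by
      rw [hVf, sub_one_mul_padicValNat_factorial]
      omega
    have : (((p - 1) * Vf : ℕ) : ℝ) ≤ (n : ℝ) := by exact_mod_cast hnat
    rwa [Nat.cast_mul, Nat.cast_sub (by omega), Nat.cast_one] at this
  have hdenom : (0:ℝ) < (p : ℝ) - 1 := by linarith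
  have hVfle : (Vf : ℝ) ≤ (n : ℝ) / ((p : ℝ) - 1) := by
    rw [le_div_iff₀ hdenom]; linarith
  have heq1 : t ^ n * (t ^ Vf)⁻¹ = (p : ℝ) ^ ((Vf : ℝ) - (n : ℝ)) := by
    rw [Real.rpow_sub (by linarith), Real.rpow_natCast, Real.rpow_natCast, ht]
    field_simp
    rw [one_div, inv_pow, inv_pow, inv_mul_cancel₀ (by positivity), inv_mul_cancel₀ (by positivity)]
  rw [heq1]
  have heq2 : (((p : ℝ) ^ (-(((p : ℝ) - 2) / ((p : ℝ) - 1)))) ^ n : ℝ)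
      = (p : ℝ) ^ ((n : ℝ) / ((p : ℝ) - 1) - (n : ℝ)) := by
    rw [← Real.rpow_natCast ((p : ℝ) ^ (-(((p : ℝ) - 2) / ((p : ℝ) - 1)))) n,
      ← Real.rpow_mul (by positivity)]
    congr 1
    field_simp
    ring
  rw [heq2]
  apply Real.rpow_le_rpow_of_exponent_le hp1R.le
  linarith



section tail

lemma tail_geom (C : ℝ) (h0 : 0 ≤ C) (h1 : C < 1) (N : ℕ) :
    (∑' i : ℕ, ite (N ≤ i) (C ^ i) 0) = C ^ N * (1 - C)⁻¹ := by
  have A : Summable fun i : ℕ => ite (N ≤ i) (C ^ i) 0 := by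
    refine ((summable_geometric_of_lt_one h0 h1).indicator {i | N ≤ i}).congr fun i => ?_
    simp [Set.indicator_apply]
  have B : ((Finset.range N).sum fun i : ℕ => ite (N ≤ i) (C ^ i) 0) = 0 :=
    Finset.sum_eq_zero fun i hi =>
      ite_eq_right_iff.2 fun h => (lt_irrefl _ ((Finset.mem_range.1 hi).trans_le h)).elim
  simp only [← Summable.sum_add_tsum_nat_add N A, B, le_add_iff_nonneg_left, zero_le', if_true, zero_add,
    pow_add, tsum_mul_left, tsum_geometric_of_lt_one h0 h1, mul_comm]

end tail

/-- **`p`-adic convergence of the Kummer series.**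
`|c_n p^n|_p → 0` (with the explicit bound `ord_p(c_n p^n) ≥ n(p−2)/(p−1) − log_p n − 1`,
i.e. `‖c_n p^n‖ ≤ p^{-(n(p−2)/(p−1) − log_p n − 1)}`), the series
`M(x) = Σ c_n p^n x^n` is summable for every `x ∈ ℤ_p`, its tails are uniformly small on
`ℤ_p`, and `M` defines a continuous function `ℤ_p → ℚ_p`. -/
theorem kummer_series_padic_convergence
    (p q r k : ℕ) [Fact p.Prime] (hodd : p ≠ 2)
    (hcop : Nat.Coprime r q) (hhalf : q < 2 * r) (hlt : r < q)
    (hk : 0 < k) (hp : p = k * q + 1) :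
    (∀ n : ℕ, ‖kummerCoeff p q r n * (p : ℚ_[p]) ^ n‖ ≤
        (p : ℝ) ^ (-((n : ℝ) * ((p : ℝ) - 2) / ((p : ℝ) - 1) - Real.logb p n - 1))) ∧
    Tendsto (fun n : ℕ => ‖kummerCoeff p q r n * (p : ℚ_[p]) ^ n‖) atTop (nhds 0) ∧
    (∀ x : ℤ_[p], Summable (fun n : ℕ => kummerCoeff p q r n * (p : ℚ_[p]) ^ n * (x : ℚ_[p]) ^ n)) ∧
    (∀ ε : ℝ, 0 < ε → ∃ N : ℕ, ∀ N' : ℕ, N ≤ N' → ∀ x : ℤ_[p],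
      ‖∑' n : ℕ, (if N' ≤ n then kummerCoeff p q r n * (p : ℚ_[p]) ^ n * (x : ℚ_[p]) ^ n else 0)‖ < ε) ∧
    Continuous (fun x : ℤ_[p] => ∑' n : ℕ, kummerCoeff p q r n * (p : ℚ_[p]) ^ n * (x : ℚ_[p]) ^ n) := by
  have hp3 : 3 ≤ p := (Fact.out : p.Prime).two_le.lt_of_ne (Ne.symm hodd)
  have hp1R : (1 : ℝ) < (p : ℝ) := by exact_mod_cast (Fact.out : p.Prime).one_lt
  set C : ℝ := (p : ℝ) ^ (-(((p : ℝ) - 2) / ((p : ℝ) - 1))) with hC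
  have hp3R : (3 : ℝ) ≤ (p : ℝ) := by exact_mod_cast hp3
  have hC0 : 0 ≤ C := (Real.rpow_pos_of_pos (by linarith) _).le
  have hC1 : C < 1 := by
    apply Real.rpow_lt_one_of_one_lt_of_neg hp1R
    have h1 : (0:ℝ) < (p : ℝ) - 2 := by linarith
    have h2 : (0:ℝ) < (p : ℝ) - 1 := by linarith
    have := div_pos h1 h2
    linarith
  have hkey : ∀ n : ℕ, ‖kummerCoeff p q r n * (p : ℚ_[p]) ^ n‖ ≤ C ^ n :=
    fun n => key_bound p q r k hodd hcop hhalf hlt hk hp n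
  -- term bound including x
  have hkeyx : ∀ (x : ℤ_[p]) (n : ℕ),
      ‖kummerCoeff p q r n * (p : ℚ_[p]) ^ n * (x : ℚ_[p]) ^ n‖ ≤ C ^ n := by
    intro x n
    rw [norm_mul]
    calc ‖kummerCoeff p q r n * (p : ℚ_[p]) ^ n‖ * ‖((x : ℚ_[p])) ^ n‖
        ≤ C ^ n * 1 := by
          apply mul_le_mul (hkey n) ?_ (norm_nonneg _) (pow_nonneg hC0 n)
          rw [norm_pow]
          exact pow_le_one₀ (norm_nonneg _) (by
            rw [PadicInt.padic_norm_e_of_padicInt]; exact x.norm_le_one)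
      _ = C ^ n := mul_one _
  refine ⟨?_, ?_, ?_, ?_, ?_⟩
  · -- explicit bound
    intro n
    refine (hkey n).trans ?_
    have hCn : C ^ n = (p : ℝ) ^ (-((n : ℝ) * ((p : ℝ) - 2) / ((p : ℝ) - 1))) := by
      rw [hC, ← Real.rpow_natCast ((p : ℝ) ^ (-(((p : ℝ) - 2) / ((p : ℝ) - 1)))) n,
        ← Real.rpow_mul (by linarith)]
      congr 1
      field_simp
    rw [hCn]
    apply Real.rpow_le_rpow_of_exponent_le hp1R.le
    have hlogb : 0 ≤ Real.logb p n := by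
      rcases Nat.eq_zero_or_pos n with h | h
      · simp [h]
      · exact Real.logb_nonneg hp1R (by exact_mod_cast h)
    linarith
  · exact squeeze_zero (fun n => norm_nonneg _) hkey
      (tendsto_pow_atTop_nhds_zero_of_lt_one hC0 hC1)
  · intro x
    exact Summable.of_norm_bounded (summable_geometric_of_lt_one hC0 hC1) (hkeyx x)
  · intro ε hε
    have htend : Tendsto (fun N : ℕ => C ^ N * (1 - C)⁻¹) atTop (nhds 0) := by
      have := (tendsto_pow_atTop_nhds_zero_of_lt_one hC0 hC1).mul_const (1 - C)⁻¹
      simpa using this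
    obtain ⟨N, hN⟩ := (htend.eventually (gt_mem_nhds hε)).exists
    refine ⟨N, fun N' hN' x => ?_⟩
    have hsum : Summable (fun n : ℕ => ite (N' ≤ n) (C ^ n) 0) := by
      refine ((summable_geometric_of_lt_one hC0 hC1).indicator {i | N' ≤ i}).congr fun i => ?_
      simp [Set.indicator_apply]
    have hg : HasSum (fun n : ℕ => ite (N' ≤ n) (C ^ n) 0) (C ^ N' * (1 - C)⁻¹) :=
      (Summable.hasSum_iff hsum).mpr (tail_geom C hC0 hC1 N')
    have hbound : ‖∑' n : ℕ,
        (if N' ≤ n then kummerCoeff p q r n * (p : ℚ_[p]) ^ n * (x : ℚ_[p]) ^ n else 0)‖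
        ≤ C ^ N' * (1 - C)⁻¹ := by
      apply tsum_of_norm_bounded hg
      intro n
      by_cases h : N' ≤ n
      · simpa [h] using hkeyx x n
      · simp [h]
    have hCpos : (0:ℝ) < 1 - C := by linarith
    have hmono : C ^ N' * (1 - C)⁻¹ ≤ C ^ N * (1 - C)⁻¹ :=
      mul_le_mul_of_nonneg_right (pow_le_pow_of_le_one hC0 hC1.le hN')
        (inv_nonneg.mpr hCpos.le)
    exact lt_of_le_of_lt (hbound.trans hmono) hN
  · apply continuous_tsum (u := fun n => C ^ n)
    · intro n
      exact (continuous_const.mul (continuous_subtype_val.pow n))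
    · exact summable_geometric_of_lt_one hC0 hC1
    · intro n x
      exact hkeyx x n
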